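/- Let G be a finite group acting on a commutative ring R, and let I ⊆ R be a G-stable ideal contained in the Jacobson radical of R. Then the two-sided ideal I⋊G = { Σ_{σ∈G} a(σ) e_σ : a(σ) ∈ I } of the twisted group ring R⋊G is contained in the Jacobson radical of R⋊G. -/

import Mathlib

/-- The twisted group ring `R⋊G` of a commutative ring `R` with an action of a finite
group `G`, characterized axiomatically. -/
structure TwistedGroupRing (G R A : Type*) [Group G] [Fintype G] [CommRing R]
    [MulSemiringAction G R] [Ring A] where
  ι : R →+* A
  e : G → A
  e_one : e 1 = 1
  e_mul : ∀ σ τ : G, e σ * e τ = e (σ * τ)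
  comm : ∀ (σ : G) (r : R), e σ * ι r = ι (σ • r) * e σ
  repr : ∀ x : A, ∃! a : G → R, x = ∑ σ : G, ι (a σ) * e σ

section Aux

variable {G R A : Type*} [Group G] [Fintype G] [CommRing R]
    [MulSemiringAction G R] [Ring A] (T : TwistedGroupRing G R A) (I : Ideal R)

/-- The set `I⋊G`. -/
def TGRmem (x : A) : Prop :=
  ∃ a : G → R, (∀ σ : G, a σ ∈ I) ∧ x = ∑ σ : G, T.ι (a σ) * T.e σ

lemma TGRmem_add {x y : A} (hx : TGRmem T I x) (hy : TGRmem T I y) :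
    TGRmem T I (x + y) := by
  obtain ⟨a, ha, rfl⟩ := hx
  obtain ⟨b, hb, rfl⟩ := hy
  exact ⟨a + b, fun σ => I.add_mem (ha σ) (hb σ), by
    rw [← Finset.sum_add_distrib]
    exact Finset.sum_congr rfl fun σ _ => by simp [add_mul]⟩

lemma TGRmem_neg {x : A} (hx : TGRmem T I x) : TGRmem T I (-x) := by
  obtain ⟨a, ha, rfl⟩ := hx
  exact ⟨-a, fun σ => I.neg_mem (ha σ), by
    rw [← Finset.sum_neg_distrib]
    exact Finset.sum_congr rfl fun σ _ => by simp [neg_mul]⟩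

lemma TGRmem_zero : TGRmem T I (0 : A) :=
  ⟨0, fun _ => I.zero_mem, by simp⟩

lemma TGRmem_single {i : R} (hi : i ∈ I) (σ : G) :
    TGRmem T I (T.ι i * T.e σ) := by
  classical
  refine ⟨fun τ => if τ = σ then i else 0, fun τ => by
    by_cases h : τ = σ <;> simp [h, hi, I.zero_mem], ?_⟩
  rw [Finset.sum_eq_single σ (fun τ _ hτ => by simp [hτ]) (by simp)]
  simp

lemma TGRmem_mul_left (hGI : ∀ (σ : G), ∀ x ∈ I, σ • x ∈ I)
    {x : A} (y : A) (hx : TGRmem T I x) : TGRmem T I (y * x) := by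
  obtain ⟨a, ha, rfl⟩ := hx
  rw [Finset.mul_sum]
  -- reduce to a single term
  have key : ∀ σ : G, ∀ i ∈ I, TGRmem T I (y * (T.ι i * T.e σ)) := by
    intro σ i hi
    obtain ⟨c, hc⟩ := (T.repr y).exists
    rw [hc, Finset.sum_mul]
    have hterm : ∀ τ : G, T.ι (c τ) * T.e τ * (T.ι i * T.e σ)
        = T.ι (c τ * τ • i) * T.e (τ * σ) := by
      intro τ
      rw [mul_assoc, ← mul_assoc (T.e τ), T.comm τ i, mul_assoc, T.e_mul,
        ← mul_assoc, ← map_mul]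
    have : (∑ τ : G, T.ι (c τ) * T.e τ * (T.ι i * T.e σ))
        = ∑ ρ : G, T.ι (c (ρ * σ⁻¹) * (ρ * σ⁻¹) • i) * T.e ρ := by
      rw [Finset.sum_congr rfl fun τ _ => hterm τ]
      exact Fintype.sum_equiv (Equiv.mulRight σ) _ _ (fun τ => by
        simp [Equiv.coe_mulRight, mul_inv_cancel_right])
    rw [this]
    exact ⟨_, fun ρ => I.mul_mem_left _ (hGI _ _ hi), rfl⟩
  -- now sum up
  classical
  induction (Finset.univ : Finset G) using Finset.induction_on with
  | empty => simpa using TGRmem_zero T I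
  | insert _ _ hσ ih =>
      rw [Finset.sum_insert hσ]
      exact TGRmem_add T I (key _ _ (ha _)) ih

/-- Key lemma: `1 + x` has a left inverse for `x ∈ I⋊G`. -/
lemma TGR_left_inv (hGI : ∀ (σ : G), ∀ x ∈ I, σ • x ∈ I)
    (hI : I ≤ Ideal.jacobson ⊥) {x : A} (hx : TGRmem T I x) :
    ∃ w : A, w * (1 + x) = 1 := by
  letI : Module R A := T.ι.toModule
  have hsmul : ∀ (r : R) (z : A), r • z = T.ι r * z := fun r z => rfl
  -- right multiplication by `1 + x` is `R`-linear
  let φ : A →ₗ[R] A :=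
    { toFun := fun y => y * (1 + x)
      map_add' := fun y z => add_mul y z _
      map_smul' := fun r y => by simp only [RingHom.id_apply, hsmul, mul_assoc] }
  -- `A` is generated by the `e σ` as an `R`-module
  have htop : (⊤ : Submodule R A) = Submodule.span R (Set.range T.e) := by
    refine le_antisymm (fun y _ => ?_) le_top
    obtain ⟨c, hc⟩ := (T.repr y).exists
    rw [hc]
    exact Submodule.sum_mem _ fun σ _ => by
      rw [← hsmul]
      exact Submodule.smul_mem _ _ (Submodule.subset_span ⟨σ, rfl⟩)
  have hfg : (⊤ : Submodule R A).FG := by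
    rw [htop]
    exact Submodule.fg_span (Set.finite_range T.e)
  -- elements of `I⋊G` lie in `I • ⊤`
  have hIA : ∀ z : A, TGRmem T I z → z ∈ (I • ⊤ : Submodule R A) := by
    rintro z ⟨a, ha, rfl⟩
    exact Submodule.sum_mem _ fun σ _ => by
      rw [← hsmul]
      exact Submodule.smul_mem_smul (ha σ) trivial
  -- Nakayama
  have hsub : (⊤ : Submodule R A) ≤ LinearMap.range φ ⊔ I • ⊤ := by
    intro y _
    have : y = φ y + (-(y * x)) := by
      show y = y * (1 + x) + -(y * x)
      rw [mul_add, mul_one, add_neg_cancel_right]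
    rw [this]
    exact Submodule.add_mem _ (Submodule.mem_sup_left ⟨y, rfl⟩)
      (Submodule.mem_sup_right (hIA _ (TGRmem_neg T I (TGRmem_mul_left T I hGI y hx))))
  have : LinearMap.range φ ⊔ (⊤ : Submodule R A) = LinearMap.range φ := by
    have := Submodule.sup_eq_sup_smul_of_le_smul_of_le_jacobson
      (I := I) (J := ⊥) (N := LinearMap.range φ) (N' := ⊤) hfg hI hsub
    simpa using this
  have h1 : (1 : A) ∈ LinearMap.range φ := by
    rw [← this]; exact Submodule.mem_sup_right trivial
  obtain ⟨w, hw⟩ := h1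
  exact ⟨w, hw⟩

end Aux

/-- If `I ⊆ R` is a `G`-stable ideal contained in the Jacobson radical of `R`, then
the two-sided ideal `I⋊G = { ∑ a(σ) e_σ : a(σ) ∈ I }` of the twisted group ring
`R⋊G` is contained in the Jacobson radical of `R⋊G`. -/
theorem twistedGroupRing_ideal_le_jacobson
    {G R A : Type*} [Group G] [Fintype G] [CommRing R]
    [MulSemiringAction G R] [Ring A]
    (T : TwistedGroupRing G R A)
    (I : Ideal R) (hGI : ∀ (σ : G), ∀ x ∈ I, σ • x ∈ I)
    (hI : I ≤ Ideal.jacobson ⊥) :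
    ∀ a : G → R, (∀ σ : G, a σ ∈ I) →
      (∑ σ : G, T.ι (a σ) * T.e σ) ∈ Ideal.jacobson (⊥ : Ideal A) := by
  intro a ha
  set x : A := ∑ σ : G, T.ι (a σ) * T.e σ with hxdef
  have hx : TGRmem T I x := ⟨a, ha, rfl⟩
  rw [Ideal.jacobson, Ideal.mem_sInf]
  rintro M ⟨-, hM⟩
  by_contra hxM
  -- M ⊔ span {x} = ⊤
  have hsup : M ⊔ Ideal.span {x} = ⊤ :=
    hM.1.2 _ (lt_of_le_of_ne le_sup_left (fun h => hxM (by
      rw [h]; exact Submodule.mem_sup_right (Ideal.subset_span rfl))))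
  have h1 : (1 : A) ∈ M ⊔ Ideal.span {x} := hsup ▸ Submodule.mem_top
  obtain ⟨m, hm, z, hz, hmz⟩ := Submodule.mem_sup.mp h1
  obtain ⟨c, hc⟩ := Submodule.mem_span_singleton.mp hz
  -- m = 1 + (-(c * x))
  have hm' : m = 1 + (-(c * x)) := by
    rw [← hc] at hmz
    have : c • x = c * x := rfl
    rw [this] at hmz
    rw [eq_sub_of_add_eq hmz, sub_eq_add_neg]
  obtain ⟨w, hw⟩ := TGR_left_inv T I hGI hI
    (TGRmem_neg T I (TGRmem_mul_left T I hGI c hx))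
  rw [← hm'] at hw
  have : (1 : A) ∈ M := by
    have := M.smul_mem w hm
    rw [smul_eq_mul, hw] at this
    exact this
  exact hM.1.1 (M.eq_top_iff_one.mpr this)
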